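/- Let 𝔤 be a finite-dimensional real Lie algebra and 𝔥 a subalgebra of codimension N such that the 𝔥-action on 𝔤/𝔥 is trace-free, and let Φ be a nonzero element of (Λ^N(𝔤/𝔥)*)^𝔥. Then for every Y in the normalizer 𝔫_𝔤(𝔥), the Chevalley–Eilenberg differential satisfies d(ι(Y)Φ) = −tr(ad_{𝔤/𝔥}(Y))·Φ. -/

import Mathlib

open Module

noncomputable def ceD {𝔤 : Type} [LieRing 𝔤] [LieAlgebra ℝ 𝔤] (p : ℕ)
    (ω : (Fin p → 𝔤) → ℝ) : (Fin (p + 1) → 𝔤) → ℝ :=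
  fun x => ∑ i : Fin (p + 1), ∑ j : Fin (p + 1),
    if (i : ℕ) < (j : ℕ) then
      (-1 : ℝ) ^ ((i : ℕ) + (j : ℕ)) *
        ω (fun k =>
          (⁅x i, x j⁆ :: (((List.ofFn x).eraseIdx j).eraseIdx i)).getD k 0)
    else 0

noncomputable def adQN {𝔤 : Type} [LieRing 𝔤] [LieAlgebra ℝ 𝔤] (𝔥 : LieSubalgebra ℝ 𝔤)
    (Y : 𝔤) (hY : Y ∈ 𝔥.normalizer) :
    (𝔤 ⧸ 𝔥.toSubmodule) →ₗ[ℝ] 𝔤 ⧸ 𝔥.toSubmodule :=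
  Submodule.mapQ _ _ (LieAlgebra.ad ℝ 𝔤 Y)
    (by intro z hz; simpa using (𝔥.mem_normalizer_iff Y).mp hY z hz)

noncomputable def adQH {𝔤 : Type} [LieRing 𝔤] [LieAlgebra ℝ 𝔤] (𝔥 : LieSubalgebra ℝ 𝔤)
    (X : 𝔥) : (𝔤 ⧸ 𝔥.toSubmodule) →ₗ[ℝ] 𝔤 ⧸ 𝔥.toSubmodule :=
  Submodule.mapQ _ _ (LieAlgebra.ad ℝ 𝔤 (X : 𝔤))
    (by intro z hz; simpa using 𝔥.lie_mem X.2 hz)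


-- Auxiliary machinery

namespace CEAux

lemma val_succAbove {m : ℕ} (p : Fin (m+1)) (k : Fin m) :
    ((p.succAbove k) : ℕ) = if (k:ℕ) < (p:ℕ) then (k:ℕ) else (k:ℕ)+1 := by
  rw [Fin.succAbove]
  split_ifs with h1 h2 h2 <;> simp_all [Fin.lt_def]

lemma ofFn_eraseIdx {α : Type*} : ∀ {m : ℕ} (y : Fin (m+1) → α) (j : Fin (m+1)),
    (List.ofFn y).eraseIdx (j:ℕ) = List.ofFn (y ∘ j.succAbove) := by
  intro m
  induction m with
  | zero => intro y j; fin_cases j; simp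
  | succ m ih =>
    intro y j
    rcases Fin.eq_zero_or_eq_succ j with h | ⟨j', rfl⟩
    · subst h; simp [List.ofFn_succ, Function.comp_def]
    · have hfun : (y ∘ j'.succ.succAbove) = Fin.cons (y 0) ((fun k => y k.succ) ∘ j'.succAbove) ∘ Fin.cases 0 Fin.succ := by
        funext k
        rcases Fin.eq_zero_or_eq_succ k with h | ⟨k', rfl⟩
        · subst h
          simp only [Function.comp_apply, Fin.cases_zero]
          congr 1
        · simp [Function.comp_def, Fin.succ_succAbove_succ]
      rw [List.ofFn_succ, Fin.val_succ, List.eraseIdx_cons_succ, ih (fun k => y k.succ) j']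
      rw [hfun]
      rw [List.ofFn_succ]
      simp [Function.comp_def]

def G {m : ℕ} (i j : Fin (m+2)) (k : Fin m) : Fin (m+2) :=
  ⟨if (k:ℕ) < (i:ℕ) then (k:ℕ) else if (k:ℕ)+1 < (j:ℕ) then (k:ℕ)+1 else (k:ℕ)+2,
   by have := k.isLt; split_ifs <;> omega⟩

lemma G_val {m : ℕ} (i j : Fin (m+2)) (k : Fin m) :
    ((G i j k : Fin (m+2)) : ℕ)
      = if (k:ℕ) < (i:ℕ) then (k:ℕ) else if (k:ℕ)+1 < (j:ℕ) then (k:ℕ)+1 else (k:ℕ)+2 := rfl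

lemma erase2 {α : Type*} {m : ℕ} (y : Fin (m+2) → α) {i j : Fin (m+2)} (hij : i < j) :
    ((List.ofFn y).eraseIdx (j:ℕ)).eraseIdx (i:ℕ) = List.ofFn (y ∘ G i j) := by
  have hj : (i:ℕ) < (j:ℕ) := hij
  have hi : (i:ℕ) < m+1 := by have := j.isLt; omega
  rw [ofFn_eraseIdx y j]
  have h2 : (i:ℕ) = ((⟨(i:ℕ), hi⟩ : Fin (m+1)) : ℕ) := rfl
  rw [h2, ofFn_eraseIdx (y ∘ j.succAbove) ⟨(i:ℕ), hi⟩]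
  congr 1
  funext k
  simp only [Function.comp_apply]
  congr 1
  apply Fin.ext
  rw [G_val, val_succAbove]
  have hv : ((Fin.succAbove ⟨(i:ℕ), hi⟩ k : Fin (m+1)) : ℕ)
      = if (k:ℕ) < (i:ℕ) then (k:ℕ) else (k:ℕ)+1 := val_succAbove _ _
  rw [hv]
  have := k.isLt
  split_ifs <;> omega

lemma getD_cons_ofFn {α : Type*} [Zero α] {m : ℕ} (c : α) (u : Fin m → α) (k : Fin (m+1)) :
    (c :: List.ofFn u).getD (k:ℕ) 0 = (Fin.cons c u : Fin (m+1) → α) k := by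
  rcases Fin.eq_zero_or_eq_succ k with h | ⟨k', rfl⟩
  · subst h; simp
  · rw [Fin.val_succ, List.getD_cons_succ,
      List.getD_eq_getElem _ _ (by simp [k'.isLt]), List.getElem_ofFn]
    simp

end CEAux

section B
variable {𝔤 : Type} [LieRing 𝔤] [LieAlgebra ℝ 𝔤] {m : ℕ}

namespace CEAux

lemma G_lt {i j : Fin (m+2)} (hij : i < j) (k : Fin m) :
    (i:ℕ) < (j:ℕ) := hij

lemma G_ne_left {i j : Fin (m+2)} (hij : i < j) (k : Fin m) : G i j k ≠ i := by
  have h : (i:ℕ) < (j:ℕ) := hij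
  apply Fin.ne_of_val_ne
  rw [G_val]; split_ifs <;> omega

lemma G_ne_right {i j : Fin (m+2)} (hij : i < j) (k : Fin m) : G i j k ≠ j := by
  have h : (i:ℕ) < (j:ℕ) := hij
  apply Fin.ne_of_val_ne
  rw [G_val]; split_ifs <;> omega

lemma G_inj {i j : Fin (m+2)} (hij : i < j) : Function.Injective (G i j) := by
  have h : (i:ℕ) < (j:ℕ) := hij
  intro a b hab
  have := congrArg (Fin.val) hab
  rw [G_val, G_val] at this
  apply Fin.ext
  split_ifs at this <;> omega

lemma G_surj {i j : Fin (m+2)} (hij : i < j) {p : Fin (m+2)} (hpi : p ≠ i) (hpj : p ≠ j) :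
    ∃ k, G i j k = p := by
  have h : (i:ℕ) < (j:ℕ) := hij
  have h2 : (p:ℕ) ≠ (i:ℕ) := fun e => hpi (Fin.ext e)
  have h3 : (p:ℕ) ≠ (j:ℕ) := fun e => hpj (Fin.ext e)
  have hp := p.isLt
  have hjj := j.isLt
  refine ⟨⟨if (p:ℕ) < i then (p:ℕ) else if (p:ℕ) < j then (p:ℕ)-1 else (p:ℕ)-2, ?_⟩, ?_⟩
  · split_ifs <;> omega
  · apply Fin.ext
    rw [G_val]
    simp only []
    split_ifs <;> omega

variable (Φ : 𝔤 [⋀^Fin (m+1)]→ₗ[ℝ] ℝ)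

noncomputable def T (i j : Fin (m+2)) (y : Fin (m+2) → 𝔤) : ℝ :=
  Φ (Fin.cons ⁅y i, y j⁆ (y ∘ G i j))

noncomputable def F (y : Fin (m+2) → 𝔤) : ℝ :=
  ∑ p ∈ Finset.univ.filter (fun p : Fin (m+2) × Fin (m+2) => p.1 < p.2),
    (-1:ℝ)^((p.1:ℕ)+(p.2:ℕ)) * T Φ p.1 p.2 y

lemma Phi_cons_add (w : Fin m → 𝔤) (c d : 𝔤) :
    Φ (Fin.cons (c+d) w) = Φ (Fin.cons c w) + Φ (Fin.cons d w) := by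
  have h : ∀ e : 𝔤, (Fin.cons e w : Fin (m+1) → 𝔤)
      = Function.update (Fin.cons c w) 0 e := fun e => (Fin.update_cons_zero _ _ _).symm
  rw [h (c+d), Φ.map_update_add, Fin.update_cons_zero, Fin.update_cons_zero]

lemma Phi_cons_smul (w : Fin m → 𝔤) (r : ℝ) (c : 𝔤) :
    Φ (Fin.cons (r • c) w) = r * Φ (Fin.cons c w) := by
  have h : ∀ e : 𝔤, (Fin.cons e w : Fin (m+1) → 𝔤)
      = Function.update (Fin.cons c w) 0 e := fun e => (Fin.update_cons_zero _ _ _).symm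
  rw [h (r • c), Φ.map_update_smul, Fin.update_cons_zero, smul_eq_mul]

lemma comp_update_G {i j : Fin (m+2)} (hij : i < j) (y : Fin (m+2) → 𝔤) {p : Fin (m+2)}
    (hp : p = i ∨ p = j) (v : 𝔤) :
    (Function.update y p v) ∘ G i j = y ∘ G i j := by
  funext k
  simp only [Function.comp_apply]
  apply Function.update_of_ne
  rcases hp with rfl | rfl
  · exact G_ne_left hij k
  · exact G_ne_right hij k

lemma comp_update_G_other {i j : Fin (m+2)} (hij : i < j) (y : Fin (m+2) → 𝔤)
    {p : Fin (m+2)} {k₀ : Fin m} (hk₀ : G i j k₀ = p) (v : 𝔤) :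
    (Function.update y p v) ∘ G i j = Function.update (y ∘ G i j) k₀ v := by
  funext k
  by_cases hk : k = k₀
  · subst hk
    simp only [Function.comp_apply]
    rw [hk₀]
    simp
  · have : G i j k ≠ p := fun e => hk (G_inj hij (e.trans hk₀.symm))
    simp only [Function.comp_apply, Function.update_of_ne this,
      Function.update_of_ne hk]

lemma T_update_add {i j : Fin (m+2)} (hij : i < j) (y : Fin (m+2) → 𝔤)
    (p : Fin (m+2)) (a b : 𝔤) :
    T Φ i j (Function.update y p (a+b))
      = T Φ i j (Function.update y p a) + T Φ i j (Function.update y p b) := by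
  have hne : i ≠ j := ne_of_lt hij
  by_cases hpi : p = i
  · subst hpi
    simp only [T, comp_update_G hij y (Or.inl rfl), Function.update_self,
      Function.update_of_ne hne.symm]
    rw [add_lie]
    exact Phi_cons_add Φ _ _ _
  · by_cases hpj : p = j
    · subst hpj
      simp only [T, comp_update_G hij y (Or.inr rfl), Function.update_self,
        Function.update_of_ne hne]
      rw [lie_add]
      exact Phi_cons_add Φ _ _ _
    · obtain ⟨k₀, hk₀⟩ := G_surj hij (Ne.symm (fun h => hpi h.symm)) (fun h => hpj h)
      simp only [T, comp_update_G_other hij y hk₀,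
        Function.update_of_ne (fun h : i = p => hpi h.symm),
        Function.update_of_ne (fun h : j = p => hpj h.symm), Fin.cons_update]
      exact Φ.map_update_add _ _ _ _

lemma T_update_smul {i j : Fin (m+2)} (hij : i < j) (y : Fin (m+2) → 𝔤)
    (p : Fin (m+2)) (r : ℝ) (a : 𝔤) :
    T Φ i j (Function.update y p (r • a)) = r * T Φ i j (Function.update y p a) := by
  have hne : i ≠ j := ne_of_lt hij
  by_cases hpi : p = i
  · subst hpi
    simp only [T, comp_update_G hij y (Or.inl rfl), Function.update_self,
      Function.update_of_ne hne.symm]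
    rw [smul_lie]
    exact Phi_cons_smul Φ _ _ _
  · by_cases hpj : p = j
    · subst hpj
      simp only [T, comp_update_G hij y (Or.inr rfl), Function.update_self,
        Function.update_of_ne hne]
      rw [lie_smul]
      exact Phi_cons_smul Φ _ _ _
    · obtain ⟨k₀, hk₀⟩ := G_surj hij (Ne.symm (fun h => hpi h.symm)) (fun h => hpj h)
      simp only [T, comp_update_G_other hij y hk₀,
        Function.update_of_ne (fun h : i = p => hpi h.symm),
        Function.update_of_ne (fun h : j = p => hpj h.symm), Fin.cons_update]
      exact Φ.map_update_smul _ _ _ _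

lemma F_add (y : Fin (m+2) → 𝔤) (p : Fin (m+2)) (a b : 𝔤) :
    F Φ (Function.update y p (a+b))
      = F Φ (Function.update y p a) + F Φ (Function.update y p b) := by
  unfold F
  rw [← Finset.sum_add_distrib]
  apply Finset.sum_congr rfl
  intro q hq
  have hij : q.1 < q.2 := (Finset.mem_filter.mp hq).2
  rw [T_update_add Φ hij]
  ring

lemma F_smul (y : Fin (m+2) → 𝔤) (p : Fin (m+2)) (r : ℝ) (a : 𝔤) :
    F Φ (Function.update y p (r • a)) = r * F Φ (Function.update y p a) := by
  unfold F
  rw [Finset.mul_sum]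
  apply Finset.sum_congr rfl
  intro q hq
  have hij : q.1 < q.2 := (Finset.mem_filter.mp hq).2
  rw [T_update_smul Φ hij]
  ring

lemma F_zero (y : Fin (m+2) → 𝔤) (p : Fin (m+2)) :
    F Φ (Function.update y p 0) = 0 := by
  have := F_smul Φ y p 0 0
  simpa using this

lemma F_finsum {ι : Type*} (y : Fin (m+2) → 𝔤) (p : Fin (m+2)) (s : Finset ι) (v : ι → 𝔤) :
    F Φ (Function.update y p (∑ k ∈ s, v k)) = ∑ k ∈ s, F Φ (Function.update y p (v k)) := by
  classical
  induction s using Finset.induction_on with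
  | empty => simpa using F_zero Φ y p
  | insert _ _ hnotmem ih =>
    rw [Finset.sum_insert hnotmem, F_add, ih, Finset.sum_insert hnotmem]

end CEAux
end B

section C
variable {𝔤 : Type} [LieRing 𝔤] [LieAlgebra ℝ 𝔤] {m : ℕ}

namespace CEAux

variable (Φ : 𝔤 [⋀^Fin (m+1)]→ₗ[ℝ] ℝ)

/-- Insertion lemma: inserting `a` at slot `k`. -/
lemma insert_sign (a : 𝔤) (k : Fin (m+1)) (z : Fin (m+1) → 𝔤) :
    Φ (Fin.cons a (z ∘ k.succAbove)) = (-1:ℝ)^(k:ℕ) * Φ (Function.update z k a) := by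
  induction k using Fin.induction generalizing z with
  | zero =>
    have h : (Fin.cons a (z ∘ (0 : Fin (m+1)).succAbove) : Fin (m+1) → 𝔤)
        = Function.update z 0 a := by
      funext l
      rcases Fin.eq_zero_or_eq_succ l with rfl | ⟨l', rfl⟩
      · simp
      · simp [Fin.zero_succAbove, Function.update_of_ne (Fin.succ_ne_zero l')]
    rw [h]; simp
  | succ k ih =>
    set kc := k.castSucc with hkc
    set ks := k.succ with hks
    have hne : kc ≠ ks := by
      apply Fin.ne_of_val_ne; simp [hkc, hks]
    set z' := Function.update (Function.update z kc (z ks)) ks (z kc) with hz'def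
    have hz' : ∀ u, z' u = if u = ks then z kc else if u = kc then z ks else z u := by
      intro u
      by_cases h1 : u = ks
      · subst h1; simp [hz'def]
      · by_cases h2 : u = kc
        · subst h2; simp [hz'def, Function.update_of_ne hne, h1]
        · simp [hz'def, Function.update_of_ne h1, Function.update_of_ne h2, h1, h2]
    have claim1 : z' ∘ kc.succAbove = z ∘ ks.succAbove := by
      funext t
      simp only [Function.comp_apply]
      rw [hz']
      have hA : ((kc.succAbove t) : ℕ) = if (t:ℕ) < (k:ℕ) then (t:ℕ) else (t:ℕ)+1 := by
        rw [val_succAbove]; simp [hkc]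
      have hB : ((ks.succAbove t) : ℕ) = if (t:ℕ) < (k:ℕ)+1 then (t:ℕ) else (t:ℕ)+1 := by
        rw [val_succAbove]; simp [hks]
      rcases lt_trichotomy ((t:ℕ)) ((k:ℕ)) with h | h | h
      · have e1 : kc.succAbove t = ks.succAbove t := by
          apply Fin.ext; rw [hA, hB]; split_ifs <;> omega
        have n1 : kc.succAbove t ≠ ks := by
          apply Fin.ne_of_val_ne; rw [hA]; simp [hks]; split_ifs <;> omega
        have n2 : kc.succAbove t ≠ kc := by
          apply Fin.ne_of_val_ne; rw [hA]; simp [hkc]; split_ifs <;> omega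
        rw [if_neg n1, if_neg n2, e1]
      · have e1 : kc.succAbove t = ks := by
          apply Fin.ext; rw [hA]; simp [hks]; split_ifs <;> omega
        have e2 : ks.succAbove t = kc := by
          apply Fin.ext; rw [hB]; simp [hkc]; split_ifs <;> omega
        rw [if_pos e1, e2]
      · have e1 : kc.succAbove t = ks.succAbove t := by
          apply Fin.ext; rw [hA, hB]; split_ifs <;> omega
        have n1 : kc.succAbove t ≠ ks := by
          apply Fin.ne_of_val_ne; rw [hA]; simp [hks]; split_ifs <;> omega
        have n2 : kc.succAbove t ≠ kc := by
          apply Fin.ne_of_val_ne; rw [hA]; simp [hkc]; split_ifs <;> omega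
        rw [if_neg n1, if_neg n2, e1]
    have claim2 : Function.update z' kc a
        = (Function.update z ks a) ∘ (Equiv.swap kc ks) := by
      funext u
      simp only [Function.comp_apply]
      by_cases h1 : u = kc
      · subst h1
        rw [Function.update_self, Equiv.swap_apply_left, Function.update_self]
      · by_cases h2 : u = ks
        · subst h2
          rw [Function.update_of_ne hne.symm, Equiv.swap_apply_right,
            Function.update_of_ne hne, hz']
          simp
        · rw [Function.update_of_ne h1, Equiv.swap_apply_of_ne_of_ne h1 h2,
            Function.update_of_ne h2, hz']
          simp [h1, h2]
    calc Φ (Fin.cons a (z ∘ ks.succAbove))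
        = Φ (Fin.cons a (z' ∘ kc.succAbove)) := by rw [claim1]
      _ = (-1:ℝ)^((kc:ℕ)) * Φ (Function.update z' kc a) := ih z'
      _ = (-1:ℝ)^((k:ℕ)) * Φ ((Function.update z ks a) ∘ (Equiv.swap kc ks)) := by
          rw [claim2]; simp [hkc]
      _ = (-1:ℝ)^((k:ℕ)) * (- Φ (Function.update z ks a)) := by
          rw [Φ.map_swap _ hne]
      _ = (-1:ℝ)^((ks:ℕ)) * Φ (Function.update z ks a) := by
          rw [hks, Fin.val_succ, pow_succ]; ring

end CEAux
end C

section D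
variable {𝔤 : Type} [LieRing 𝔤] [LieAlgebra ℝ 𝔤] {m : ℕ}

namespace CEAux

variable (Φ : 𝔤 [⋀^Fin (m+1)]→ₗ[ℝ] ℝ)

lemma F_adj (y : Fin (m+2) → 𝔤) (c : Fin (m+1)) (hc : y c.castSucc = y c.succ) :
    F Φ y = 0 := by
  classical
  set cc := c.castSucc with hccdef
  set cs := c.succ with hcsdef
  have hccv : (cc:ℕ) = (c:ℕ) := rfl
  have hcsv : (cs:ℕ) = (c:ℕ)+1 := rfl
  have hne : cc ≠ cs := by apply Fin.ne_of_val_ne; omega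
  -- termwise vanishing for pairs disjoint from {cc, cs}
  have claim0 : ∀ i j : Fin (m+2), i < j → i ≠ cc → i ≠ cs → j ≠ cc → j ≠ cs →
      T Φ i j y = 0 := by
    intro i j hij hi1 hi2 hj1 hj2
    obtain ⟨k1, hk1⟩ := G_surj hij (Ne.symm hi1) (Ne.symm hj1)
    obtain ⟨k2, hk2⟩ := G_surj hij (Ne.symm hi2) (Ne.symm hj2)
    have hk12 : k1 ≠ k2 := by
      intro e; rw [e, hk2] at hk1; exact hne hk1.symm
    apply Φ.map_eq_zero_of_eq _ (i := k1.succ) (j := k2.succ)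
    · rw [Fin.cons_succ, Fin.cons_succ]
      simp only [Function.comp_apply, hk1, hk2]
      exact hc
    · intro e; exact hk12 (Fin.succ_injective _ e)
  have claim_mid : T Φ cc cs y = 0 := by
    simp only [T]
    rw [hc, lie_self]
    exact Φ.map_coord_zero 0 (Fin.cons_zero _ _)
  have claim_mix1 : ∀ k : Fin (m+2), (k:ℕ) < (cc:ℕ) → T Φ k cc y = T Φ k cs y := by
    intro k hk
    have hcomp : y ∘ G k cc = y ∘ G k cs := by
      funext t
      simp only [Function.comp_apply]
      by_cases h : (t:ℕ)+1 = (cc:ℕ)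
      · have e1 : G k cc t = cs := by
          apply Fin.ext; rw [G_val]; split_ifs <;> omega
        have e2 : G k cs t = cc := by
          apply Fin.ext; rw [G_val]; split_ifs <;> omega
        rw [e1, e2]; exact hc.symm
      · have e : G k cc t = G k cs t := by
          apply Fin.ext; rw [G_val, G_val]; split_ifs <;> omega
        rw [e]
    simp only [T]
    rw [hcomp, hc]
  have claim_mix2 : ∀ k : Fin (m+2), (cs:ℕ) < (k:ℕ) → T Φ cc k y = T Φ cs k y := by
    intro k hk
    have hcomp : y ∘ G cc k = y ∘ G cs k := by
      funext t
      simp only [Function.comp_apply]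
      by_cases h : (t:ℕ) = (cc:ℕ)
      · have e1 : G cc k t = cs := by
          apply Fin.ext; rw [G_val]; split_ifs <;> omega
        have e2 : G cs k t = cc := by
          apply Fin.ext; rw [G_val]; split_ifs <;> omega
        rw [e1, e2]; exact hc.symm
      · have e : G cc k t = G cs k t := by
          apply Fin.ext; rw [G_val, G_val]; split_ifs <;> omega
        rw [e]
    simp only [T]
    rw [hcomp, hc]
  set σ := Equiv.swap cc cs with hσdef
  have hσcc : σ cc = cs := Equiv.swap_apply_left _ _
  have hσcs : σ cs = cc := Equiv.swap_apply_right _ _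
  have hσother : ∀ u : Fin (m+2), u ≠ cc → u ≠ cs → σ u = u := fun u h1 h2 =>
    Equiv.swap_apply_of_ne_of_ne h1 h2
  set f : Fin (m+2) × Fin (m+2) → ℝ :=
    fun p => (-1:ℝ)^((p.1:ℕ)+(p.2:ℕ)) * T Φ p.1 p.2 y with hfdef
  set gg : Fin (m+2) × Fin (m+2) → Fin (m+2) × Fin (m+2) :=
    fun p => if p = (cc,cs) then p else (σ p.1, σ p.2) with hggdef
  have master : ∀ p : Fin (m+2) × Fin (m+2), p.1 < p.2 →
      (gg p).1 < (gg p).2 ∧ f p + f (gg p) = 0 ∧ (f p ≠ 0 → gg p ≠ p) ∧ gg (gg p) = p := by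
    rintro ⟨i, j⟩ hp
    replace hp : i < j := hp
    have hpv : (i:ℕ) < (j:ℕ) := hp
    by_cases hm : ((i,j) : Fin (m+2) × Fin (m+2)) = (cc, cs)
    · have hfp : f (i, j) = 0 := by
        obtain ⟨hi, hj⟩ := Prod.mk.injEq .. ▸ hm
        simp only [hfdef, hi, hj, claim_mid, mul_zero]
      have hgp : gg (i,j) = (i,j) := by simp only [hggdef, hm, if_pos]
      exact ⟨by rw [hgp]; exact hp, by rw [hgp, hfp]; ring,
        fun hf => absurd hfp hf, by rw [hgp, hgp]⟩
    · have hgp : gg (i,j) = (σ i, σ j) := by simp only [hggdef, hm, if_neg, ite_false]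
      have build : ∀ q1 q2 : Fin (m+2), (σ i, σ j) = (q1, q2) → q1 < q2 →
          f (i,j) + f (q1, q2) = 0 → (q1, q2) ≠ (i, j) → gg (q1, q2) = (i, j) →
          (gg (i,j)).1 < (gg (i,j)).2 ∧ f (i,j) + f (gg (i,j)) = 0 ∧
            (f (i,j) ≠ 0 → gg (i,j) ≠ (i,j)) ∧ gg (gg (i,j)) = (i,j) := by
        intro q1 q2 he hlt hsum hne' hinv
        rw [hgp, he]
        exact ⟨hlt, hsum, fun _ => hne', by rw [hinv]⟩
      by_cases hicc : i = cc
      · subst hicc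
        have hjcs : j ≠ cs := fun h => hm (by rw [h])
        have hjv : (j:ℕ) ≠ (cs:ℕ) := fun h => hjcs (Fin.ext h)
        have hjgt : (cs:ℕ) < (j:ℕ) := by omega
        have hjcc : j ≠ cc := fun h => by rw [h] at hpv; omega
        have hσj : σ j = j := hσother j hjcc hjcs
        refine build cs j (by rw [hσcc, hσj]) (Fin.lt_def.mpr hjgt) ?_ ?_ ?_
        · simp only [hfdef, ← claim_mix2 j hjgt,
            show (cs:ℕ)+(j:ℕ) = ((cc:ℕ)+(j:ℕ))+1 by omega, pow_succ]
          ring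
        · intro h; exact hne ((Prod.mk.injEq .. ▸ h).1).symm
        · have hq : ((cs : Fin (m+2)), j) ≠ (cc, cs) := fun h => hne ((Prod.mk.injEq .. ▸ h).1).symm
          simp only [hggdef, hq, ite_false, hσcs, hσj]
      · by_cases hics : i = cs
        · subst hics
          have hjgt : (cs:ℕ) < (j:ℕ) := hpv
          have hjcs : j ≠ cs := fun h => by rw [h] at hjgt; omega
          have hjcc : j ≠ cc := fun h => by rw [h] at hjgt; omega
          have hσj : σ j = j := hσother j hjcc hjcs
          refine build cc j (by rw [hσcs, hσj]) (Fin.lt_def.mpr (by omega)) ?_ ?_ ?_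
          · simp only [hfdef, ← claim_mix2 j hjgt,
              show (cs:ℕ)+(j:ℕ) = ((cc:ℕ)+(j:ℕ))+1 by omega, pow_succ]
            ring
          · intro h; exact hne ((Prod.mk.injEq .. ▸ h).1)
          · have hq : ((cc : Fin (m+2)), j) ≠ (cc, cs) := fun h => hjcs ((Prod.mk.injEq .. ▸ h).2)
            simp only [hggdef, hq, ite_false, hσcc, hσj]
        · by_cases hjcc : j = cc
          · subst hjcc
            have hilt : (i:ℕ) < (cc:ℕ) := hpv
            have hics2 : i ≠ cs := fun h => by rw [h] at hilt; omega
            have hσi : σ i = i := hσother i hicc hics2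
            refine build i cs (by rw [hσcc, hσi]) (Fin.lt_def.mpr (by omega)) ?_ ?_ ?_
            · simp only [hfdef, ← claim_mix1 i hilt,
                show (i:ℕ)+(cs:ℕ) = ((i:ℕ)+(cc:ℕ))+1 by omega, pow_succ]
              ring
            · intro h; exact hne ((Prod.mk.injEq .. ▸ h).2).symm
            · have hq : (i, (cs : Fin (m+2))) ≠ (cc, cs) := fun h => hicc ((Prod.mk.injEq .. ▸ h).1)
              simp only [hggdef, hq, ite_false, hσcs, hσi]
          · by_cases hjcs : j = cs
            · subst hjcs
              have hiv : (i:ℕ) ≠ (cc:ℕ) := fun h => hicc (Fin.ext h)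
              have hilt : (i:ℕ) < (cc:ℕ) := by omega
              have hσi : σ i = i := hσother i hicc hics
              refine build i cc (by rw [hσcs, hσi]) (Fin.lt_def.mpr (by omega)) ?_ ?_ ?_
              · simp only [hfdef, ← claim_mix1 i hilt,
                  show (i:ℕ)+(cs:ℕ) = ((i:ℕ)+(cc:ℕ))+1 by omega, pow_succ]
                ring
              · intro h; exact hne ((Prod.mk.injEq .. ▸ h).2)
              · have hq : (i, (cc : Fin (m+2))) ≠ (cc, cs) := fun h => hicc ((Prod.mk.injEq .. ▸ h).1)
                simp only [hggdef, hq, ite_false, hσcc, hσi]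
            · have hσi : σ i = i := hσother i hicc hics
              have hσj : σ j = j := hσother j hjcc hjcs
              have hfp : f (i,j) = 0 := by
                simp only [hfdef, claim0 i j hp hicc hics hjcc hjcs, mul_zero]
              have hg2 : gg (i,j) = (i,j) := by rw [hgp, hσi, hσj]
              exact ⟨by rw [hg2]; exact hp, by rw [hg2, hfp]; ring,
                fun hf => absurd hfp hf, by rw [hg2, hg2]⟩
  show (∑ p ∈ Finset.univ.filter (fun p : Fin (m+2) × Fin (m+2) => p.1 < p.2), f p) = 0
  refine Finset.sum_involution (fun p _ => gg p) ?_ ?_ ?_ ?_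
  · intro p hp
    exact (master p (Finset.mem_filter.mp hp).2).2.1
  · intro p hp hf
    exact (master p (Finset.mem_filter.mp hp).2).2.2.1 hf
  · intro p hp
    exact Finset.mem_filter.mpr ⟨Finset.mem_univ _, (master p (Finset.mem_filter.mp hp).2).1⟩
  · intro p hp
    exact (master p (Finset.mem_filter.mp hp).2).2.2.2

end CEAux
end D

section E
variable {𝔤 : Type} [LieRing 𝔤] [LieAlgebra ℝ 𝔤] {m : ℕ}

namespace CEAux

variable (Φ : 𝔤 [⋀^Fin (m+1)]→ₗ[ℝ] ℝ)

lemma F_swap_adj (y : Fin (m+2) → 𝔤) (c : Fin (m+1)) :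
    F Φ (Function.update (Function.update y c.castSucc (y c.succ)) c.succ (y c.castSucc))
      = - F Φ y := by
  set cc := c.castSucc with hccdef
  set cs := c.succ with hcsdef
  have hne : cc ≠ cs := by apply Fin.ne_of_val_ne; simp [hccdef, hcsdef]
  set u := y cc with hu
  set v := y cs with hv
  have expand : F Φ (Function.update (Function.update y cc (u+v)) cs (u+v))
      = (F Φ (Function.update (Function.update y cs u) cc u)
          + F Φ (Function.update (Function.update y cs u) cc v))
        + (F Φ (Function.update (Function.update y cs v) cc u)
          + F Φ (Function.update (Function.update y cs v) cc v)) := by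
    rw [F_add Φ (Function.update y cc (u+v)) cs u v]
    congr 1
    · rw [Function.update_comm hne, F_add]
    · rw [Function.update_comm hne, F_add]
  have hA : F Φ (Function.update (Function.update y cs u) cc u) = 0 := by
    apply F_adj Φ _ c
    rw [← hccdef, ← hcsdef]
    simp [Function.update_apply, hne, hne.symm]
  have hD : F Φ (Function.update (Function.update y cs v) cc v) = 0 := by
    apply F_adj Φ _ c
    rw [← hccdef, ← hcsdef]
    simp [Function.update_apply, hne, hne.symm]
  have hC : F Φ (Function.update (Function.update y cs v) cc u) = F Φ y := by
    rw [hv, Function.update_eq_self, hu, Function.update_eq_self]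
  have hW : F Φ (Function.update (Function.update y cc (u+v)) cs (u+v)) = 0 := by
    apply F_adj Φ _ c
    rw [← hccdef, ← hcsdef]
    simp [Function.update_apply, hne, hne.symm]
  have hB : Function.update (Function.update y cs u) cc v
      = Function.update (Function.update y cc v) cs u := Function.update_comm hne.symm _ _ _
  rw [hW, hA, hC, hD] at expand
  rw [← hB]
  linarith

lemma F_eq_aux : ∀ (d : ℕ) (y : Fin (m+2) → 𝔤) (a b : Fin (m+2)),
    (a:ℕ) < (b:ℕ) → (b:ℕ) - (a:ℕ) = d → y a = y b → F Φ y = 0 := by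
  intro d
  induction d using Nat.strong_induction_on with
  | _ d ih =>
    intro y a b hab hd hy
    rcases Nat.lt_or_ge 1 d with hd1 | hd1
    · -- distance at least 2
      have hblt := b.isLt
      set c : Fin (m+1) := ⟨(b:ℕ)-1, by omega⟩ with hcdef
      have hccv : (c.castSucc : ℕ) = (b:ℕ)-1 := rfl
      have hcsb : c.succ = b := by apply Fin.ext; rw [Fin.val_succ]; simp [hcdef]; omega
      have hne : c.castSucc ≠ c.succ := by apply Fin.ne_of_val_ne; simp
      set y' := Function.update (Function.update y c.castSucc (y c.succ)) c.succ
        (y c.castSucc) with hy'def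
      have hswap := F_swap_adj Φ y c
      have ha1 : a ≠ c.castSucc := by apply Fin.ne_of_val_ne; rw [hccv]; omega
      have ha2 : a ≠ c.succ := by apply Fin.ne_of_val_ne; rw [hcsb]; omega
      have hy'a : y' a = y a := by
        rw [hy'def, Function.update_of_ne ha2, Function.update_of_ne ha1]
      have hy'c : y' c.castSucc = y b := by
        rw [hy'def, Function.update_of_ne hne, Function.update_self, hcsb]
      have h0 : F Φ y' = 0 := by
        apply ih (d-1) (by omega) y' a c.castSucc (by rw [hccv]; omega) (by rw [hccv]; omega)
        rw [hy'a, hy'c, hy]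
      rw [h0] at hswap
      linarith
    · -- adjacent
      have hd' : (b:ℕ) = (a:ℕ)+1 := by omega
      have hblt := b.isLt
      set c : Fin (m+1) := ⟨(a:ℕ), by omega⟩ with hcdef
      have h1 : c.castSucc = a := by apply Fin.ext; rfl
      have h2 : c.succ = b := by apply Fin.ext; rw [Fin.val_succ]; simp [hcdef]; omega
      exact F_adj Φ y c (by rw [h1, h2]; exact hy)

lemma F_eq (y : Fin (m+2) → 𝔤) (a b : Fin (m+2)) (hab : a ≠ b) (hy : y a = y b) :
    F Φ y = 0 := by
  rcases lt_trichotomy ((a:ℕ)) ((b:ℕ)) with h | h | h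
  · exact F_eq_aux Φ _ y a b h rfl hy
  · exact absurd (Fin.ext h) hab
  · exact F_eq_aux Φ _ y b a h rfl hy.symm

end CEAux
end E

section F
variable {𝔤 : Type} [LieRing 𝔤] [LieAlgebra ℝ 𝔤] {m : ℕ}

namespace CEAux

variable (Φ : 𝔤 [⋀^Fin (m+1)]→ₗ[ℝ] ℝ)

lemma F_eq_double (y : Fin (m+2) → 𝔤) :
    F Φ y = ∑ i : Fin (m+2), ∑ j : Fin (m+2),
      if i < j then (-1:ℝ)^((i:ℕ)+(j:ℕ)) * T Φ i j y else 0 := by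
  rw [F, Finset.sum_filter, ← Fintype.sum_prod_type']

lemma F_hor (𝔥 : LieSubalgebra ℝ 𝔤)
    (hhor : ∀ v : Fin (m+1) → 𝔤, (∃ i, v i ∈ 𝔥) → Φ v = 0)
    (hinv : ∀ X ∈ 𝔥, ∀ v : Fin (m+1) → 𝔤,
      ∑ i, Φ (Function.update v i ⁅X, v i⁆) = 0)
    (y : Fin (m+2) → 𝔤) (p : Fin (m+2)) (hp : y p ∈ 𝔥) : F Φ y = 0 := by
  classical
  set z : Fin (m+1) → 𝔤 := y ∘ p.succAbove with hzdef
  set c : Fin (m+2) → Fin (m+2) → ℝ :=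
    fun i j => if i < j then (-1:ℝ)^((i:ℕ)+(j:ℕ)) * T Φ i j y else 0 with hcdef
  -- terms not involving p vanish
  have step1 : ∀ i j : Fin (m+2), i < j → i ≠ p → j ≠ p → T Φ i j y = 0 := by
    intro i j hij hi hj
    obtain ⟨k₀, hk₀⟩ := G_surj hij (Ne.symm hi) (Ne.symm hj)
    apply hhor
    exact ⟨k₀.succ, by rw [Fin.cons_succ]; simpa [hk₀] using hp⟩
  have step1' : ∀ i j : Fin (m+2), i ≠ p → j ≠ p → c i j = 0 := by
    intro i j hi hj
    simp only [hcdef]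
    by_cases hij : i < j
    · rw [if_pos hij, step1 i j hij hi hj]; ring
    · rw [if_neg hij]
  have hcpp : c p p = 0 := by simp [hcdef]
  have step2 : ∀ i : Fin (m+2), i ≠ p → ∑ j, c i j = c i p := by
    intro i hi
    apply Finset.sum_eq_single p
    · intro j _ hj; exact step1' i j hi hj
    · intro h; exact absurd (Finset.mem_univ p) h
  have step3 : F Φ y = (∑ i, c i p) + ∑ j, c p j := by
    rw [F_eq_double]
    have e1 : ∀ i : Fin (m+2), (∑ j, c i j) = (if i = p then ∑ j, c p j else c i p) := by
      intro i
      by_cases hi : i = p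
      · subst hi; rw [if_pos rfl]
      · rw [if_neg hi, step2 i hi]
    calc (∑ i : Fin (m+2), ∑ j, c i j)
        = ∑ i : Fin (m+2), (if i = p then ∑ j, c p j else c i p) :=
          Finset.sum_congr rfl (fun i _ => e1 i)
      _ = ∑ i : Fin (m+2), (c i p + if i = p then ∑ j, c p j else 0) := by
          apply Finset.sum_congr rfl
          intro i _
          by_cases hi : i = p
          · subst hi; rw [if_pos rfl, if_pos rfl, hcpp, zero_add]
          · rw [if_neg hi, if_neg hi, add_zero]
      _ = (∑ i, c i p) + ∑ j, c p j := by
          rw [Finset.sum_add_distrib, Finset.sum_ite_eq' Finset.univ p]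
          simp
  -- reindex both sums over the complement of p
  have step4 : F Φ y = ∑ k : Fin (m+1), (c (p.succAbove k) p + c p (p.succAbove k)) := by
    rw [step3, Fin.sum_univ_succAbove (fun i => c i p) p,
      Fin.sum_univ_succAbove (fun j => c p j) p, hcpp]
    rw [Finset.sum_add_distrib]
    ring
  have hXmem := hp
  -- per-index computation
  have step5 : ∀ k : Fin (m+1), c (p.succAbove k) p + c p (p.succAbove k)
      = (-1:ℝ)^((p:ℕ)+1) * Φ (Function.update z k ⁅y p, z k⁆) := by
    intro k
    have hzk : z k = y (p.succAbove k) := rfl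
    rcases Nat.lt_or_ge ((k:ℕ)) ((p:ℕ)) with hkp | hkp
    · -- succAbove k = k < p ; first term active
      have hiv : ((p.succAbove k : Fin (m+2)) : ℕ) = (k:ℕ) := by
        rw [val_succAbove]; rw [if_pos hkp]
      have hlt : p.succAbove k < p := Fin.lt_def.mpr (by omega)
      have hnlt : ¬ (p < p.succAbove k) := by rw [Fin.lt_def, hiv]; omega
      have hcomp : y ∘ G (p.succAbove k) p = z ∘ k.succAbove := by
        funext t
        simp only [Function.comp_apply, hzdef]
        congr 1
        apply Fin.ext
        simp only [G_val, val_succAbove]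
        split_ifs <;> omega
      have hbr : ⁅y (p.succAbove k), y p⁆ = -⁅y p, z k⁆ := by
        rw [hzk, ← lie_skew]
      have hT : T Φ (p.succAbove k) p y = - ((-1:ℝ)^(k:ℕ) * Φ (Function.update z k ⁅y p, z k⁆)) := by
        rw [T, hcomp, hbr]
        rw [show -⁅y p, z k⁆ = (-1:ℝ) • ⁅y p, z k⁆ by simp, Phi_cons_smul, insert_sign]
        ring
      simp only [hcdef, if_pos hlt, if_neg hnlt, hiv, hT, add_zero]
      rw [show ((k:ℕ)+(p:ℕ)) = (k:ℕ)+(p:ℕ) from rfl]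
      have hpow : (-1:ℝ)^((k:ℕ)+(p:ℕ)) * (-1:ℝ)^(k:ℕ) = (-1:ℝ)^((p:ℕ)) := by
        rw [← pow_add]
        rw [show (k:ℕ)+(p:ℕ)+(k:ℕ) = 2*(k:ℕ)+(p:ℕ) by omega, pow_add, pow_mul]
        norm_num
      rw [pow_succ]
      calc (-1:ℝ)^((k:ℕ)+(p:ℕ)) * -((-1:ℝ)^(k:ℕ) * Φ (Function.update z k ⁅y p, z k⁆))
          = -(((-1:ℝ)^((k:ℕ)+(p:ℕ)) * (-1:ℝ)^(k:ℕ)) * Φ (Function.update z k ⁅y p, z k⁆)) := by ring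
        _ = (-1:ℝ)^(p:ℕ) * (-1:ℝ) * Φ (Function.update z k ⁅y p, z k⁆) := by rw [hpow]; ring
    · -- succAbove k = k+1 > p ; second term active
      have hiv : ((p.succAbove k : Fin (m+2)) : ℕ) = (k:ℕ)+1 := by
        rw [val_succAbove]; rw [if_neg (by omega)]
      have hlt : p < p.succAbove k := Fin.lt_def.mpr (by omega)
      have hnlt : ¬ (p.succAbove k < p) := by rw [Fin.lt_def, hiv]; omega
      have hcomp : y ∘ G p (p.succAbove k) = z ∘ k.succAbove := by
        funext t
        simp only [Function.comp_apply, hzdef]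
        congr 1
        apply Fin.ext
        simp only [G_val, val_succAbove]
        split_ifs <;> omega
      have hT : T Φ p (p.succAbove k) y = (-1:ℝ)^(k:ℕ) * Φ (Function.update z k ⁅y p, z k⁆) := by
        rw [T, hcomp, ← hzk, insert_sign]
      simp only [hcdef, if_pos hlt, if_neg hnlt, hiv, hT, zero_add]
      have hpow : (-1:ℝ)^((p:ℕ)+((k:ℕ)+1)) * (-1:ℝ)^(k:ℕ) = (-1:ℝ)^((p:ℕ)+1) := by
        rw [← pow_add]
        rw [show (p:ℕ)+((k:ℕ)+1)+(k:ℕ) = 2*(k:ℕ)+((p:ℕ)+1) by omega, pow_add, pow_mul]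
        norm_num
      rw [← mul_assoc, hpow]
  have step6 : ∑ k : Fin (m+1), Φ (Function.update z k ⁅y p, z k⁆) = 0 := hinv (y p) hp z
  rw [step4]
  calc ∑ k : Fin (m+1), (c (p.succAbove k) p + c p (p.succAbove k))
      = ∑ k : Fin (m+1), (-1:ℝ)^((p:ℕ)+1) * Φ (Function.update z k ⁅y p, z k⁆) :=
        Finset.sum_congr rfl (fun k _ => step5 k)
    _ = (-1:ℝ)^((p:ℕ)+1) * ∑ k : Fin (m+1), Φ (Function.update z k ⁅y p, z k⁆) := by
        rw [Finset.mul_sum]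
    _ = 0 := by rw [step6, mul_zero]

end CEAux
end F

section G
variable {𝔤 : Type} [LieRing 𝔤] [LieAlgebra ℝ 𝔤] {m : ℕ}

namespace CEAux

variable (Φ : 𝔤 [⋀^Fin (m+1)]→ₗ[ℝ] ℝ)

lemma F_vanish [FiniteDimensional ℝ 𝔤] (𝔥 : LieSubalgebra ℝ 𝔤)
    (hN : Module.finrank ℝ (𝔤 ⧸ 𝔥.toSubmodule) = m+1)
    (hhor : ∀ v : Fin (m+1) → 𝔤, (∃ i, v i ∈ 𝔥) → Φ v = 0)
    (hinv : ∀ X ∈ 𝔥, ∀ v : Fin (m+1) → 𝔤,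
      ∑ i, Φ (Function.update v i ⁅X, v i⁆) = 0)
    (y : Fin (m+2) → 𝔤) : F Φ y = 0 := by
  classical
  set π := 𝔥.toSubmodule.mkQ with hπ
  have hdep : ¬ LinearIndependent ℝ (fun k : Fin (m+2) => π (y k)) := by
    intro h
    have := h.fintype_card_le_finrank
    rw [hN, Fintype.card_fin] at this
    omega
  obtain ⟨c, hsum, q, hq⟩ := Fintype.not_linearIndependent_iff.mp hdep
  have hH : (∑ k, c k • y k) ∈ 𝔥 := by
    rw [← LieSubalgebra.mem_toSubmodule, ← Submodule.Quotient.mk_eq_zero]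
    have e : (Submodule.Quotient.mk (∑ k, c k • y k) : 𝔤 ⧸ 𝔥.toSubmodule)
        = π (∑ k, c k • y k) := rfl
    rw [e, map_sum]
    simpa using hsum
  have e : (∑ k, c k • y k) = c q • y q + ∑ k ∈ Finset.univ.erase q, c k • y k :=
    (Finset.add_sum_erase _ _ (Finset.mem_univ q)).symm
  have e2 : (∑ k, c k • y k) + ∑ k ∈ Finset.univ.erase q, (-(c k)) • y k = c q • y q := by
    rw [e]
    simp only [neg_smul]
    rw [Finset.sum_neg_distrib]
    abel
  have hyq : y q = (c q)⁻¹ • ((∑ k, c k • y k) + ∑ k ∈ Finset.univ.erase q, (-(c k)) • y k) := by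
    rw [e2, smul_smul, inv_mul_cancel₀ hq, one_smul]
  have h1 : F Φ y = F Φ (Function.update y q (y q)) := by rw [Function.update_eq_self]
  rw [h1, hyq, F_smul, F_add]
  have hz1 : F Φ (Function.update y q (∑ k, c k • y k)) = 0 := by
    apply F_hor Φ 𝔥 hhor hinv _ q
    rw [Function.update_self]
    exact hH
  have hz2 : F Φ (Function.update y q (∑ k ∈ Finset.univ.erase q, (-(c k)) • y k)) = 0 := by
    rw [F_finsum]
    apply Finset.sum_eq_zero
    intro k hk
    have hkq : k ≠ q := (Finset.mem_erase.mp hk).1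
    rw [F_smul]
    have : F Φ (Function.update y q (y k)) = 0 := by
      apply F_eq Φ _ q k (Ne.symm hkq)
      rw [Function.update_self, Function.update_of_ne hkq]
    rw [this, mul_zero]
  rw [hz1, hz2]
  ring

end CEAux
end G

section H
variable {𝔤 : Type} [LieRing 𝔤] [LieAlgebra ℝ 𝔤] {m : ℕ}

namespace CEAux

lemma alt_update_sum {V : Type} [AddCommGroup V] [Module ℝ V] {r : ℕ} {ι : Type*}
    (φ : V [⋀^Fin r]→ₗ[ℝ] ℝ) (v : Fin r → V) (k : Fin r) (s : Finset ι) (w : ι → V) :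
    φ (Function.update v k (∑ i ∈ s, w i)) = ∑ i ∈ s, φ (Function.update v k (w i)) := by
  classical
  induction s using Finset.induction_on with
  | empty => simp
  | insert _ _ hnm ih =>
    rw [Finset.sum_insert hnm, Finset.sum_insert hnm, φ.map_update_add, ih]

lemma Phi_congr (Φ : 𝔤 [⋀^Fin (m+1)]→ₗ[ℝ] ℝ) (𝔥 : LieSubalgebra ℝ 𝔤)
    (hhor : ∀ v : Fin (m+1) → 𝔤, (∃ i, v i ∈ 𝔥) → Φ v = 0)
    (a b : Fin (m+1) → 𝔤) (hab : ∀ i, a i - b i ∈ 𝔥) : Φ a = Φ b := by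
  classical
  have claim : ∀ S : Finset (Fin (m+1)), Φ (fun i => if i ∈ S then a i else b i) = Φ b := by
    intro S
    induction S using Finset.induction_on with
    | empty => simp
    | insert j S hjS ih =>
      have ht : (fun i => if i ∈ insert j S then a i else b i)
          = Function.update (fun i => if i ∈ S then a i else b i) j (a j) := by
        funext i
        by_cases hi : i = j
        · subst hi; simp [hjS]
        · simp [Function.update_of_ne hi, hi]
      rw [ht]
      have hsplit : a j = b j + (a j - b j) := by abel
      rw [hsplit, Φ.map_update_add]
      have h1 : Function.update (fun i => if i ∈ S then a i else b i) j (b j)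
          = (fun i => if i ∈ S then a i else b i) := by
        funext i
        by_cases hi : i = j
        · subst hi; simp [hjS]
        · simp [Function.update_of_ne hi]
      have h2 : Φ (Function.update (fun i => if i ∈ S then a i else b i) j (a j - b j)) = 0 :=
        hhor _ ⟨j, by rw [Function.update_self]; exact hab j⟩
      rw [h1, h2, ih, add_zero]
  have := claim Finset.univ
  simpa using this

/-- The auxiliary alternating map `v ↦ ∑ k, φ (update v k (A (v k)))`. -/
noncomputable def GA {V : Type} [AddCommGroup V] [Module ℝ V]
    (φ : V [⋀^Fin (m+1)]→ₗ[ℝ] ℝ) (A : V →ₗ[ℝ] V) : V [⋀^Fin (m+1)]→ₗ[ℝ] ℝ where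
  toFun := fun v => ∑ k, φ (Function.update v k (A (v k)))
  map_update_add' := by
    intro inst v p x y
    have hinst : inst = instDecidableEqFin (m+1) := Subsingleton.elim _ _
    subst hinst
    rw [← Finset.sum_add_distrib]
    apply Finset.sum_congr rfl
    intro k _
    by_cases hk : k = p
    · subst hk
      simp only [Function.update_self, Function.update_idem]
      rw [map_add, φ.map_update_add]
    · simp only [Function.update_of_ne hk]
      rw [Function.update_comm (Ne.symm hk), Function.update_comm (Ne.symm hk),
        Function.update_comm (Ne.symm hk), φ.map_update_add]
  map_update_smul' := by
    intro inst v p r x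
    have hinst : inst = instDecidableEqFin (m+1) := Subsingleton.elim _ _
    subst hinst
    rw [Finset.smul_sum]
    apply Finset.sum_congr rfl
    intro k _
    by_cases hk : k = p
    · subst hk
      simp only [Function.update_self, Function.update_idem]
      rw [map_smul, φ.map_update_smul]
    · simp only [Function.update_of_ne hk]
      rw [Function.update_comm (Ne.symm hk), Function.update_comm (Ne.symm hk),
        φ.map_update_smul]
  map_eq_zero_of_eq' := by
    intro v i j hv hij
    classical
    have hterm : ∀ k, k ≠ i → k ≠ j → φ (Function.update v k (A (v k))) = 0 := by
      intro k hki hkj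
      apply φ.map_eq_zero_of_eq _ (i := i) (j := j)
      · rw [Function.update_of_ne (Ne.symm hki), Function.update_of_ne (Ne.symm hkj), hv]
      · exact hij
    have hpair : φ (Function.update v i (A (v i))) + φ (Function.update v j (A (v j))) = 0 := by
      have hswap : Function.update v i (A (v i))
          = (Function.update v j (A (v j))) ∘ Equiv.swap i j := by
        funext u
        by_cases h1 : u = i
        · subst h1
          rw [Function.update_self, Function.comp_apply, Equiv.swap_apply_left,
            Function.update_self, hv]
        · by_cases h2 : u = j
          · subst h2
            rw [Function.update_of_ne hij.symm, Function.comp_apply, Equiv.swap_apply_right,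
              Function.update_of_ne hij, hv]
          · rw [Function.update_of_ne h1, Function.comp_apply,
              Equiv.swap_apply_of_ne_of_ne h1 h2, Function.update_of_ne h2]
      rw [hswap, φ.map_swap _ hij]
      ring
    calc (∑ k, φ (Function.update v k (A (v k))))
        = ∑ k ∈ ({i, j} : Finset (Fin (m+1))), φ (Function.update v k (A (v k))) := by
          symm
          apply Finset.sum_subset (Finset.subset_univ _)
          intro k _ hk
          simp only [Finset.mem_insert, Finset.mem_singleton, not_or] at hk
          exact hterm k hk.1 hk.2
      _ = 0 := by
          rw [Finset.sum_pair hij]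
          exact hpair

lemma trace_identity {V : Type} [AddCommGroup V] [Module ℝ V] [FiniteDimensional ℝ V]
    (hV : Module.finrank ℝ V = m+1) (φ : V [⋀^Fin (m+1)]→ₗ[ℝ] ℝ) (A : V →ₗ[ℝ] V)
    (v : Fin (m+1) → V) :
    ∑ k, φ (Function.update v k (A (v k))) = (LinearMap.trace ℝ V A) * φ v := by
  classical
  set e : Basis (Fin (m+1)) ℝ V := Module.finBasisOfFinrankEq ℝ V hV with hedef
  have key : GA φ A = (LinearMap.trace ℝ V A) • φ := by
    apply Basis.ext_alternating e
    intro w hw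
    have hbij : Function.Bijective w := (Fintype.bijective_iff_injective_and_card w).mpr ⟨hw, rfl⟩
    set σ : Equiv.Perm (Fin (m+1)) := Equiv.ofBijective w hbij with hσdef
    have hwσ : ∀ g : Fin (m+1) → V, (fun i => g (w i)) = g ∘ σ := fun g => rfl
    have base : GA φ A e = (LinearMap.trace ℝ V A) * φ e := by
      have hGA : GA φ A e = ∑ k, φ (Function.update e k (A (e k))) := rfl
      have hAe : ∀ k : Fin (m+1), A (e k) = ∑ a, e.repr (A (e k)) a • e a := by
        intro k
        exact (e.sum_repr (A (e k))).symm
      have hterm : ∀ k, φ (Function.update e k (A (e k)))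
          = e.repr (A (e k)) k * φ e := by
        intro k
        conv_lhs => rw [hAe k]
        rw [alt_update_sum, Finset.sum_eq_single k]
        · rw [φ.map_update_smul, Function.update_eq_self, smul_eq_mul]
        · intro a _ hak
          rw [φ.map_update_smul]
          have : φ (Function.update e k (e a)) = 0 := by
            apply φ.map_eq_zero_of_eq _ (i := a) (j := k)
            · rw [Function.update_of_ne hak, Function.update_self]
            · exact hak
          rw [this, smul_zero]
        · intro h; exact absurd (Finset.mem_univ k) h
      have htr : LinearMap.trace ℝ V A = ∑ k, e.repr (A (e k)) k := by
        rw [LinearMap.trace_eq_matrix_trace ℝ e A, Matrix.trace]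
        apply Finset.sum_congr rfl
        intro k _
        rw [Matrix.diag]
        rw [LinearMap.toMatrix_apply]
      rw [hGA, htr, Finset.sum_mul]
      exact Finset.sum_congr rfl (fun k _ => hterm k)
    have hb2 : (GA φ A) ⇑e = ((LinearMap.trace ℝ V A) • φ) ⇑e := by
      rw [AlternatingMap.smul_apply, smul_eq_mul]; exact base
    rw [hwσ e, (GA φ A).map_perm e σ, ((LinearMap.trace ℝ V A) • φ).map_perm e σ, hb2]
  have := congrArg (fun ψ : V [⋀^Fin (m+1)]→ₗ[ℝ] ℝ => ψ v) key
  simp only [AlternatingMap.smul_apply, smul_eq_mul] at this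
  exact this

end CEAux
end H

section I
namespace CEAux
variable {𝔤 : Type} [LieRing 𝔤] [LieAlgebra ℝ 𝔤]

lemma cons_cons_swap {r : ℕ} (Φ : 𝔤 [⋀^Fin (r+2)]→ₗ[ℝ] ℝ) (a b : 𝔤) (u : Fin r → 𝔤) :
    Φ (Fin.cons a (Fin.cons b u)) = - Φ (Fin.cons b (Fin.cons a u)) := by
  have h01 : (0 : Fin (r+2)) ≠ 1 := by
    apply Fin.ne_of_val_ne; simp
  have h : (Fin.cons a (Fin.cons b u) : Fin (r+2) → 𝔤)
      = (Fin.cons b (Fin.cons a u)) ∘ Equiv.swap 0 1 := by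
    funext l
    rcases Fin.eq_zero_or_eq_succ l with rfl | ⟨l', rfl⟩
    · rw [Function.comp_apply, Equiv.swap_apply_left, Fin.cons_zero]
      have : ((1 : Fin (r+2))) = Fin.succ 0 := by
        apply Fin.ext; simp
      rw [this, Fin.cons_succ, Fin.cons_zero]
    · rcases Fin.eq_zero_or_eq_succ l' with rfl | ⟨l'', rfl⟩
      · have e1 : (Fin.succ 0 : Fin (r+2)) = 1 := by apply Fin.ext; simp
        rw [e1, Function.comp_apply, Equiv.swap_apply_right, Fin.cons_zero]
        rw [← e1, Fin.cons_succ, Fin.cons_zero]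
      · have hne0 : (l''.succ.succ : Fin (r+2)) ≠ 0 := Fin.succ_ne_zero _
        have hne1 : (l''.succ.succ : Fin (r+2)) ≠ 1 := by
          apply Fin.ne_of_val_ne; simp
        rw [Function.comp_apply, Equiv.swap_apply_of_ne_of_ne hne0 hne1,
          Fin.cons_succ, Fin.cons_succ, Fin.cons_succ, Fin.cons_succ]
  rw [h, Φ.map_swap _ h01]

end CEAux
end I

/-- Relative cochains `(Λ^p(𝔤/𝔥)*)^𝔥` are modelled as alternating forms on `𝔤` that are
horizontal (vanish when some argument lies in `𝔥`) and `𝔥`-invariant.  For `Y` in the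
normalizer of `𝔥` one has `d(ι(Y)Φ) = −tr(ad_{𝔤/𝔥}(Y))·Φ`. -/
theorem stmt2 (𝔤 : Type) [LieRing 𝔤] [LieAlgebra ℝ 𝔤] [FiniteDimensional ℝ 𝔤]
    (𝔥 : LieSubalgebra ℝ 𝔤) (n : ℕ)
    (hN : n + 1 = Module.finrank ℝ (𝔤 ⧸ 𝔥.toSubmodule))
    (htf : ∀ X : 𝔥, LinearMap.trace ℝ _ (adQH 𝔥 X) = 0)
    (Φ : 𝔤 [⋀^Fin (n + 1)]→ₗ[ℝ] ℝ) (hΦ : Φ ≠ 0)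
    (hhor : ∀ v : Fin (n + 1) → 𝔤, (∃ i, v i ∈ 𝔥) → Φ v = 0)
    (hinv : ∀ X ∈ 𝔥, ∀ v : Fin (n + 1) → 𝔤,
      ∑ i, Φ (Function.update v i ⁅X, v i⁆) = 0)
    (Y : 𝔤) (hY : Y ∈ 𝔥.normalizer) :
    ∀ x : Fin (n + 1) → 𝔤,
      ceD n (fun w => Φ (Matrix.vecCons Y w)) x =
        -(LinearMap.trace ℝ _ (adQN 𝔥 Y hY)) * Φ x := by
  classical
  obtain ⟨s, hs⟩ :=
    (𝔥.toSubmodule.mkQ).exists_rightInverse_of_surjective (Submodule.range_mkQ _)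
  set π := 𝔥.toSubmodule.mkQ with hπ
  have hsval : ∀ q, π (s q) = q := by
    intro q
    have := LinearMap.ext_iff.mp hs q
    simpa using this
  set φq := Φ.compLinearMap s with hφq
  have hdesc : ∀ v : Fin (n+1) → 𝔤, Φ v = φq (fun i => π (v i)) := by
    intro v
    have h2 : φq (fun i => π (v i)) = Φ (fun i => s (π (v i))) := rfl
    rw [h2]
    apply CEAux.Phi_congr Φ 𝔥 hhor
    intro i
    rw [← LieSubalgebra.mem_toSubmodule, ← Submodule.Quotient.mk_eq_zero]
    have h3 : (Submodule.Quotient.mk (v i - s (π (v i))) : 𝔤 ⧸ 𝔥.toSubmodule)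
        = π (v i - s (π (v i))) := rfl
    rw [h3, map_sub, hsval]
    simp
  set A := adQN 𝔥 Y hY with hA
  have hAad : ∀ g : 𝔤, A (π g) = π ⁅Y, g⁆ := by
    intro g
    rw [hA, adQN]
    have h4 : π g = Submodule.Quotient.mk g := rfl
    rw [h4, Submodule.mapQ_apply, LieAlgebra.ad_apply]
    rfl
  have lemA : ∀ x : Fin (n+1) → 𝔤, (∑ k, Φ (Function.update x k ⁅Y, x k⁆))
      = (LinearMap.trace ℝ _ A) * Φ x := by
    intro x
    have h1 : ∀ k, Φ (Function.update x k ⁅Y, x k⁆)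
        = φq (Function.update (fun i => π (x i)) k (A ((fun i => π (x i)) k))) := by
      intro k
      rw [hdesc]
      congr 1
      funext i
      by_cases hik : i = k
      · subst hik
        rw [Function.update_self, Function.update_self, hAad]
      · rw [Function.update_of_ne hik, Function.update_of_ne hik]
    calc (∑ k, Φ (Function.update x k ⁅Y, x k⁆))
        = ∑ k, φq (Function.update (fun i => π (x i)) k (A ((fun i => π (x i)) k))) :=
          Finset.sum_congr rfl (fun k _ => h1 k)
      _ = (LinearMap.trace ℝ _ A) * φq (fun i => π (x i)) :=
          CEAux.trace_identity hN.symm φq A _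
      _ = (LinearMap.trace ℝ _ A) * Φ x := by rw [← hdesc]
  intro x
  have hFv := CEAux.F_vanish Φ 𝔥 hN.symm hhor hinv (Fin.cons Y x)
  rw [CEAux.F_eq_double, Fin.sum_univ_succ] at hFv
  -- first block equals -(trace * Φ x)
  have part1 : ∀ j' : Fin (n+1), CEAux.T Φ 0 j'.succ (Fin.cons Y x)
      = (-1:ℝ)^(j':ℕ) * Φ (Function.update x j' ⁅Y, x j'⁆) := by
    intro j'
    have hcomp : (Fin.cons Y x : Fin (n+2) → 𝔤) ∘ CEAux.G 0 j'.succ = x ∘ j'.succAbove := by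
      funext k
      have he : CEAux.G (0 : Fin (n+2)) j'.succ k = Fin.succ (j'.succAbove k) := by
        apply Fin.ext
        simp only [CEAux.G_val, Fin.val_succ, CEAux.val_succAbove, Fin.val_zero]
        show (if (k:ℕ) < 0 then (k:ℕ) else if (k:ℕ)+1 < (j':ℕ)+1 then (k:ℕ)+1 else (k:ℕ)+2)
          = (if (k:ℕ) < (j':ℕ) then (k:ℕ) else (k:ℕ)+1) + 1
        split_ifs <;> omega
      rw [Function.comp_apply, he, Fin.cons_succ, Function.comp_apply]
    have hT : CEAux.T Φ 0 j'.succ (Fin.cons Y x)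
        = Φ (Fin.cons ⁅Y, x j'⁆ (x ∘ j'.succAbove)) := by
      simp only [CEAux.T, Fin.cons_zero, Fin.cons_succ, hcomp]
    rw [hT]
    exact CEAux.insert_sign Φ _ _ _
  have hin0 : (∑ j : Fin (n+2), if (0 : Fin (n+2)) < j then
        (-1:ℝ)^((((0 : Fin (n+2))):ℕ)+(j:ℕ)) * CEAux.T Φ 0 j (Fin.cons Y x) else 0)
      = -((LinearMap.trace ℝ _ A) * Φ x) := by
    rw [Fin.sum_univ_succ]
    have hz : (if (0 : Fin (n+2)) < 0 then
        (-1:ℝ)^((((0 : Fin (n+2))):ℕ)+(((0 : Fin (n+2))):ℕ)) * CEAux.T Φ 0 0 (Fin.cons Y x)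
        else 0) = 0 := by
      rw [if_neg (lt_irrefl _)]
    rw [hz, zero_add]
    have hterm : ∀ j' : Fin (n+1), (if (0 : Fin (n+2)) < j'.succ then
        (-1:ℝ)^((((0 : Fin (n+2))):ℕ)+((j'.succ : Fin (n+2)):ℕ)) *
          CEAux.T Φ 0 j'.succ (Fin.cons Y x) else 0)
        = - Φ (Function.update x j' ⁅Y, x j'⁆) := by
      intro j'
      rw [if_pos (Fin.succ_pos j'), part1 j', Fin.val_zero, Fin.val_succ]
      have hpow : (-1:ℝ)^(0+((j':ℕ)+1)) * (-1:ℝ)^(j':ℕ) = -1 := by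
        rw [← pow_add, show 0+((j':ℕ)+1)+(j':ℕ) = 2*(j':ℕ)+1 by omega, pow_add, pow_mul]
        norm_num
      rw [← mul_assoc, hpow]
      ring
    rw [Finset.sum_congr rfl (fun j' _ => hterm j')]
    rw [Finset.sum_neg_distrib, lemA x]
  -- split on n for the second block
  rcases n with _ | n'
  · -- n = 0
    have h0 : ceD 0 (fun w => Φ (Matrix.vecCons Y w)) x = 0 := by
      simp [ceD]
    rw [h0]
    have hsum2 : (∑ i' : Fin 1, ∑ j : Fin 2, if i'.succ < j then
        (-1:ℝ)^(((i'.succ : Fin 2):ℕ)+(j:ℕ)) * CEAux.T Φ i'.succ j (Fin.cons Y x) else 0)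
        = 0 := by
      apply Finset.sum_eq_zero
      intro i' _
      apply Finset.sum_eq_zero
      intro j _
      rw [if_neg]
      intro hlt
      have hiv : ((i'.succ : Fin 2) : ℕ) = 1 := by
        rw [Fin.val_succ]
        simp
      have := Fin.lt_def.mp hlt
      have hj := j.isLt
      omega
    rw [hsum2, add_zero, hin0] at hFv
    linarith
  · -- n = n' + 1
    have part2 : ∀ i' j' : Fin (n'+2), i' < j' →
        CEAux.T Φ i'.succ j'.succ (Fin.cons Y x)
          = - Φ (Matrix.vecCons Y (fun k : Fin (n'+1) =>
              (⁅x i', x j'⁆ ::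
                (((List.ofFn x).eraseIdx (j':ℕ)).eraseIdx (i':ℕ))).getD (k:ℕ) 0)) := by
      intro i' j' hij
      have hlist : (((List.ofFn x).eraseIdx (j':ℕ)).eraseIdx (i':ℕ))
          = List.ofFn (x ∘ CEAux.G i' j') := CEAux.erase2 x hij
      have htup : (fun k : Fin (n'+1) =>
            ((⁅x i', x j'⁆ :: List.ofFn (x ∘ CEAux.G i' j'))).getD (k:ℕ) 0)
          = Fin.cons ⁅x i', x j'⁆ (x ∘ CEAux.G i' j') :=
        funext (fun k => CEAux.getD_cons_ofFn _ _ k)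
      have hcomp2 : (Fin.cons Y x : Fin (n'+3) → 𝔤) ∘ CEAux.G i'.succ j'.succ
          = Fin.cons Y (x ∘ CEAux.G i' j') := by
        funext k
        rcases Fin.eq_zero_or_eq_succ k with rfl | ⟨k'', rfl⟩
        · have he : CEAux.G (i'.succ) (j'.succ) (0 : Fin (n'+1)) = 0 := by
            apply Fin.ext
            rw [CEAux.G_val]
            simp
          rw [Function.comp_apply, he, Fin.cons_zero, Fin.cons_zero]
        · have he : CEAux.G i'.succ j'.succ (Fin.succ k'') = Fin.succ (CEAux.G i' j' k'') := by
            apply Fin.ext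
            simp only [Fin.val_succ, CEAux.G_val]
            split_ifs <;> omega
          rw [Function.comp_apply, he, Fin.cons_succ, Fin.cons_succ, Function.comp_apply]
      have hT : CEAux.T Φ i'.succ j'.succ (Fin.cons Y x)
          = Φ (Fin.cons ⁅x i', x j'⁆ (Fin.cons Y (x ∘ CEAux.G i' j'))) := by
        simp only [CEAux.T, Fin.cons_succ, hcomp2]
      rw [hlist, htup, hT, CEAux.cons_cons_swap Φ ⁅x i', x j'⁆ Y (x ∘ CEAux.G i' j')]
      rfl
    have hterm2 : ∀ i' j' : Fin (n'+2), (if i'.succ < j'.succ then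
          (-1:ℝ)^(((i'.succ : Fin (n'+3)):ℕ)+((j'.succ : Fin (n'+3)):ℕ)) *
            CEAux.T Φ i'.succ j'.succ (Fin.cons Y x) else 0)
        = - (if (i':ℕ) < (j':ℕ) then
            (-1:ℝ)^((i':ℕ)+(j':ℕ)) * Φ (Matrix.vecCons Y (fun k : Fin (n'+1) =>
              (⁅x i', x j'⁆ ::
                (((List.ofFn x).eraseIdx (j':ℕ)).eraseIdx (i':ℕ))).getD (k:ℕ) 0)) else 0) := by
      intro i' j'
      by_cases hij : i' < j'
      · rw [if_pos (Fin.succ_lt_succ_iff.mpr hij), if_pos (Fin.lt_def.mp hij), part2 i' j' hij]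
        simp only [Fin.val_succ]
        have hpow : (-1:ℝ)^(((i':ℕ)+1)+((j':ℕ)+1)) = (-1:ℝ)^((i':ℕ)+(j':ℕ)) := by
          rw [show ((i':ℕ)+1)+((j':ℕ)+1) = ((i':ℕ)+(j':ℕ))+2 by omega, pow_add]
          norm_num
        rw [hpow]
        ring
      · have h1 : ¬ (i'.succ < j'.succ) := fun h => hij (Fin.succ_lt_succ_iff.mp h)
        have h2 : ¬ ((i':ℕ) < (j':ℕ)) := fun h => hij (Fin.lt_def.mpr h)
        rw [if_neg h1, if_neg h2, neg_zero]
    have hinS : ∀ i' : Fin (n'+2), (∑ j : Fin (n'+3), if i'.succ < j then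
          (-1:ℝ)^(((i'.succ : Fin (n'+3)):ℕ)+((j):ℕ)) * CEAux.T Φ i'.succ j (Fin.cons Y x)
          else 0)
        = - ∑ j' : Fin (n'+2), (if (i':ℕ) < (j':ℕ) then
            (-1:ℝ)^((i':ℕ)+(j':ℕ)) * Φ (Matrix.vecCons Y (fun k : Fin (n'+1) =>
              (⁅x i', x j'⁆ ::
                (((List.ofFn x).eraseIdx (j':ℕ)).eraseIdx (i':ℕ))).getD (k:ℕ) 0)) else 0) := by
      intro i'
      rw [Fin.sum_univ_succ]
      rw [if_neg (Fin.not_lt_zero _), zero_add]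
      rw [Finset.sum_congr rfl (fun j' _ => hterm2 i' j')]
      rw [Finset.sum_neg_distrib]
    rw [hin0, Finset.sum_congr rfl (fun i' _ => hinS i'), Finset.sum_neg_distrib] at hFv
    have hgoal : ceD (n'+1) (fun w => Φ (Matrix.vecCons Y w)) x
        = ∑ i' : Fin (n'+2), ∑ j' : Fin (n'+2), (if (i':ℕ) < (j':ℕ) then
            (-1:ℝ)^((i':ℕ)+(j':ℕ)) * Φ (Matrix.vecCons Y (fun k : Fin (n'+1) =>
              (⁅x i', x j'⁆ ::
                (((List.ofFn x).eraseIdx (j':ℕ)).eraseIdx (i':ℕ))).getD (k:ℕ) 0)) else 0) := rfl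
    rw [hgoal]
    linarith
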